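/- Let ρ be an n×n complex positive semidefinite Hermitian matrix with trace 1, Λ an n×n Hermitian matrix with D = (ρΛ + Λρ)/2 satisfying tr D = 0, and assume tr(ρΛ²) > 0. Then the set { (tr(DO))²/(tr(ρO²) − (tr(ρO))²) : O Hermitian with tr(ρO²) − (tr(ρO))² > 0 } has greatest element tr(ρΛ²), and this greatest value is attained at O = Λ (indeed tr(ρΛ) = 0 and tr(DΛ) = tr(ρΛ²)). -/

import Mathlib

open scoped ComplexOrder
open Matrix Complex

namespace QFIaux

variable {n : ℕ}

private lemma trace_eq_inner (A B : Matrix (Fin n) (Fin n) ℂ)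
    (x y : EuclideanSpace ℂ (Fin n × Fin n))
    (hx : x = WithLp.toLp 2 (fun p : Fin n × Fin n => A p.1 p.2))
    (hy : y = WithLp.toLp 2 (fun p : Fin n × Fin n => B p.1 p.2)) :
    (Aᴴ * B).trace = inner ℂ x y := by
  subst hx hy
  simp only [PiLp.inner_apply, RCLike.inner_apply, Matrix.trace, Matrix.diag,
    Matrix.mul_apply, Matrix.conjTranspose_apply, Fintype.sum_prod_type]
  rw [Finset.sum_comm]
  simp only [starRingEnd_apply]
  exact Finset.sum_congr rfl fun _ _ => Finset.sum_congr rfl fun _ _ => mul_comm _ _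

private lemma trace_cs (A B : Matrix (Fin n) (Fin n) ℂ) :
    ‖(Aᴴ * B).trace‖ ^ 2 ≤ (Aᴴ * A).trace.re * (Bᴴ * B).trace.re := by
  set x : EuclideanSpace ℂ (Fin n × Fin n) := WithLp.toLp 2 (fun p : Fin n × Fin n => A p.1 p.2) with hx
  set y : EuclideanSpace ℂ (Fin n × Fin n) := WithLp.toLp 2 (fun p : Fin n × Fin n => B p.1 p.2) with hy
  have h := inner_mul_inner_self_le (𝕜 := ℂ) x y
  have hsym : ‖(inner ℂ y x : ℂ)‖ = ‖(inner ℂ x y : ℂ)‖ := by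
    rw [← inner_conj_symm x y, RCLike.norm_conj]
  rw [trace_eq_inner A B x y hx hy, trace_eq_inner A A x x hx hx,
    trace_eq_inner B B y y hy hy]
  calc ‖(inner ℂ x y : ℂ)‖ ^ 2 = ‖(inner ℂ x y : ℂ)‖ * ‖(inner ℂ y x : ℂ)‖ := by
        rw [hsym]; ring
  _ ≤ _ := h

private lemma trace_real {P Q : Matrix (Fin n) (Fin n) ℂ}
    (hP : P.IsHermitian) (hQ : Q.IsHermitian) :
    (P * Q).trace = ((P * Q).trace.re : ℂ) := by
  have h : (starRingEnd ℂ) (P * Q).trace = (P * Q).trace := by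
    have := Matrix.trace_conjTranspose (P * Q)
    rw [Matrix.conjTranspose_mul, hP.eq, hQ.eq, Matrix.trace_mul_comm] at this
    rw [starRingEnd_apply, ← this]
  exact (Complex.conj_eq_iff_re.mp h).symm

private lemma trace_sandwich (S A B : Matrix (Fin n) (Fin n) ℂ) (hSH : Sᴴ = S) :
    ((A * S)ᴴ * (B * S)).trace = (S * S * (Aᴴ * B)).trace := by
  rw [Matrix.conjTranspose_mul, hSH]
  rw [show S * Aᴴ * (B * S) = S * (Aᴴ * B * S) by noncomm_ring]
  rw [Matrix.trace_mul_comm, show Aᴴ * B * S * S = Aᴴ * B * (S * S) by noncomm_ring,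
    Matrix.trace_mul_comm]

end QFIaux

open QFIaux in
/-- The quantum Fisher information `tr(ρΛ²)` is the greatest signal-to-noise ratio
over all Hermitian observables with positive variance, and is attained at `O = Λ`
(indeed `tr(ρΛ) = 0` and `tr(DΛ) = tr(ρΛ²)`). -/
theorem qfi_eq_max_snr {n : ℕ} (ρ Λ D : Matrix (Fin n) (Fin n) ℂ)
    (hρ : ρ.PosSemidef) (hρtr : ρ.trace = 1) (hΛ : Λ.IsHermitian)
    (hDdef : D = (1 / 2 : ℂ) • (ρ * Λ + Λ * ρ)) (hDtr : D.trace = 0)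
    (hQFI : 0 < (ρ * Λ ^ 2).trace.re) :
    IsGreatest
      {s : ℝ | ∃ O : Matrix (Fin n) (Fin n) ℂ, O.IsHermitian ∧
        0 < (ρ * O ^ 2).trace.re - ((ρ * O).trace.re) ^ 2 ∧
        s = ((D * O).trace.re) ^ 2 /
          ((ρ * O ^ 2).trace.re - ((ρ * O).trace.re) ^ 2)}
      ((ρ * Λ ^ 2).trace.re)
    ∧ (ρ * Λ).trace = 0 ∧ (D * Λ).trace = (ρ * Λ ^ 2).trace := by
  have hρH : ρᴴ = ρ := hρ.1
  -- tr(ρΛ) = 0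
  have htrρΛ : (ρ * Λ).trace = 0 := by
    have hD : D.trace = (ρ * Λ).trace := by
      rw [hDdef, Matrix.trace_smul, Matrix.trace_add, Matrix.trace_mul_comm Λ ρ]
      simp [smul_eq_mul]; ring
    rw [← hD, hDtr]
  -- tr(DΛ) = tr(ρΛ²)
  have hDΛ : (D * Λ).trace = (ρ * Λ ^ 2).trace := by
    rw [hDdef, Matrix.smul_mul, Matrix.add_mul, Matrix.trace_smul, Matrix.trace_add,
      Matrix.trace_mul_cycle Λ ρ Λ, Matrix.trace_mul_comm (Λ * Λ) ρ,
      show ρ * (Λ * Λ) = ρ * Λ ^ 2 by rw [pow_two],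
      show ρ * Λ * Λ = ρ * Λ ^ 2 by rw [pow_two, mul_assoc]]
    simp [smul_eq_mul]; ring
  refine ⟨⟨⟨Λ, hΛ, ?_, ?_⟩, ?_⟩, htrρΛ, hDΛ⟩
  · rw [htrρΛ]; simpa using hQFI
  · rw [htrρΛ, hDΛ]
    have hne : (ρ * Λ ^ 2).trace.re ≠ 0 := ne_of_gt hQFI
    simp only [Complex.zero_re]
    field_simp
    rw [zero_pow two_ne_zero, sub_zero, div_self hne]
  -- upper bound
  · rintro s ⟨O, hO, hvpos, rfl⟩
    set c : ℝ := (ρ * O).trace.re with hcdef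
    have hc : (ρ * O).trace = (c : ℂ) := trace_real hρ.1 hO
    set O' : Matrix (Fin n) (Fin n) ℂ := O - (c : ℂ) • 1 with hO'def
    have hO'H : O'ᴴ = O' := by
      rw [hO'def, Matrix.conjTranspose_sub, Matrix.conjTranspose_smul, hO.eq,
        Matrix.conjTranspose_one]
      rw [Complex.star_def, Complex.conj_ofReal]
    open scoped MatrixOrder in
    set S := CFC.sqrt ρ with hSdef
    have h0 : (0:Matrix (Fin n) (Fin n) ℂ) ≤ ρ := by
      open scoped MatrixOrder in exact Matrix.nonneg_iff_posSemidef.mpr hρ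
    have hS2 : S * S = ρ := by
      open scoped MatrixOrder in exact CFC.sqrt_mul_sqrt_self ρ h0
    have hSH : Sᴴ = S := by
      open scoped MatrixOrder in exact (IsSelfAdjoint.of_nonneg (CFC.sqrt_nonneg ρ)).star_eq
    -- traces of the Gram matrix
    have hXX : ((Λ * S)ᴴ * (Λ * S)).trace = (ρ * Λ ^ 2).trace := by
      rw [trace_sandwich S Λ Λ hSH, hS2, hΛ.eq, ← pow_two]
    have hXY : ((Λ * S)ᴴ * (O' * S)).trace = (ρ * (Λ * O')).trace := by
      rw [trace_sandwich S Λ O' hSH, hS2, hΛ.eq]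
    have hYY : ((O' * S)ᴴ * (O' * S)).trace = (ρ * (O' * O')).trace := by
      rw [trace_sandwich S O' O' hSH, hS2, hO'H]
    -- variance
    have hvarC : (ρ * (O' * O')).trace = (ρ * O ^ 2).trace - (c : ℂ) ^ 2 := by
      rw [hO'def]
      simp only [Matrix.mul_sub, Matrix.sub_mul, Matrix.mul_smul, Matrix.smul_mul,
        Matrix.mul_one, Matrix.one_mul, Matrix.trace_sub, Matrix.trace_smul, smul_eq_mul]
      rw [show ρ * (O * O) = ρ * O ^ 2 by rw [pow_two], hc, hρtr]
      ring
    have hvar : (ρ * (O' * O')).trace.re = (ρ * O ^ 2).trace.re - c ^ 2 := by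
      have h2 : (((c : ℂ)) ^ 2).re = c ^ 2 := by
        rw [← Complex.ofReal_pow, Complex.ofReal_re]
      rw [hvarC, Complex.sub_re, h2]
    -- numerator
    have hΛO' : (ρ * (Λ * O')).trace = (ρ * (Λ * O)).trace := by
      rw [hO'def]
      simp only [Matrix.mul_sub, Matrix.mul_smul, Matrix.mul_one, Matrix.trace_sub,
        Matrix.trace_smul]
      rw [← mul_assoc, show (ρ * Λ).trace = 0 from htrρΛ]
      simp
    have hstar : (ρ * (O * Λ)).trace = (starRingEnd ℂ) (ρ * (Λ * O)).trace := by
      rw [starRingEnd_apply, ← Matrix.trace_conjTranspose, Matrix.conjTranspose_mul,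
        Matrix.conjTranspose_mul, hρH, hΛ.eq, hO.eq, Matrix.trace_mul_comm]
    have hDO : (D * O).trace.re = (ρ * (Λ * O)).trace.re := by
      rw [hDdef, Matrix.smul_mul, Matrix.add_mul, Matrix.trace_smul, Matrix.trace_add,
        mul_assoc ρ Λ O, ← Matrix.trace_mul_cycle ρ O Λ, mul_assoc ρ O Λ, hstar,
        Complex.add_conj]
      simp [smul_eq_mul, Complex.mul_re]
    -- Cauchy–Schwarz
    have hcs := trace_cs (Λ * S) (O' * S)
    rw [hXX, hXY, hYY] at hcs
    have hre : ((ρ * (Λ * O')).trace.re) ^ 2 ≤ ‖(ρ * (Λ * O')).trace‖ ^ 2 := by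
      have h1 := Complex.abs_re_le_norm ((ρ * (Λ * O')).trace)
      calc ((ρ * (Λ * O')).trace.re) ^ 2
          = |(ρ * (Λ * O')).trace.re| ^ 2 := by rw [_root_.sq_abs]
      _ ≤ ‖(ρ * (Λ * O')).trace‖ ^ 2 := by
            apply pow_le_pow_left₀ (abs_nonneg _) h1
    have key : ((D * O).trace.re) ^ 2 ≤
        (ρ * Λ ^ 2).trace.re * ((ρ * O ^ 2).trace.re - c ^ 2) := by
      rw [hDO, ← hΛO', ← hvar]
      exact hre.trans hcs
    rw [div_le_iff₀ hvpos]
    calc ((D * O).trace.re) ^ 2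
        ≤ (ρ * Λ ^ 2).trace.re * ((ρ * O ^ 2).trace.re - c ^ 2) := key
    _ = (ρ * Λ ^ 2).trace.re * ((ρ * O ^ 2).trace.re - ((ρ * O).trace.re) ^ 2) := by
        rw [hcdef]
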